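/- For the complete bipartite graph K_{m,n} (m,n ≥ 1), the L^1 spanning tree congestion is C_1(K_{m,n}) = 3mn − 2(m+n−1), attained by the double-star spanning tree T* in which all edges except one are terminal (only two vertices have degree > 1). -/

import Mathlib

open Classical

noncomputable section CongestionDefs

variable {V : Type*} [Fintype V] [DecidableEq V]

/-- Weighted congestion of an edge `e` of a spanning tree `T` of `G`: total weight of
edges of `G` whose endpoints are separated in `T` with `e` removed. -/
def edgeCongestion (G T : SimpleGraph V) (ω : Sym2 V → ℝ) (e : Sym2 V) : ℝ :=
  ∑ f : Sym2 V,
    if f ∈ G.edgeSet ∧ ∃ a b : V, f = s(a, b) ∧ ¬ (T.deleteEdges {e}).Reachable a b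
    then ω f else 0

/-- The `L^p` congestion of a spanning tree `T` (for a natural `p ≥ 1`). -/
def treeCong (G T : SimpleGraph V) (ω : Sym2 V → ℝ) (p : ℕ) : ℝ :=
  (∑ e : Sym2 V, if e ∈ T.edgeSet then (edgeCongestion G T ω e) ^ p else 0) ^ ((1 : ℝ) / p)

/-- The `L^∞` congestion of a spanning tree `T`. -/
def treeCongTop (G T : SimpleGraph V) (ω : Sym2 V → ℝ) : ℝ :=
  ⨆ e ∈ T.edgeSet, edgeCongestion G T ω e

/-- `T` is a spanning tree of `G`. -/
def IsSpanningTree (G T : SimpleGraph V) : Prop := T ≤ G ∧ T.IsTree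

/-- The `L^p` spanning tree congestion of `(G, ω)`. -/
def graphCong (G : SimpleGraph V) (ω : Sym2 V → ℝ) (p : ℕ) : ℝ :=
  sInf {x | ∃ T : SimpleGraph V, IsSpanningTree G T ∧ treeCong G T ω p = x}

/-- The `L^∞` spanning tree congestion of `(G, ω)`. -/
def graphCongTop (G : SimpleGraph V) (ω : Sym2 V → ℝ) : ℝ :=
  sInf {x | ∃ T : SimpleGraph V, IsSpanningTree G T ∧ treeCongTop G T ω = x}

/-- Total weight of (the edges of) a graph. -/
def totalWeight (T : SimpleGraph V) (ρ : Sym2 V → ℝ) : ℝ :=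
  ∑ e : Sym2 V, if e ∈ T.edgeSet then ρ e else 0

end CongestionDefs

/-- The star graph centered at `v`: `v` is joined to every other vertex. -/
def starGraph {V : Type*} (v : V) : SimpleGraph V where
  Adj a b := a ≠ b ∧ (a = v ∨ b = v)
  symm := by
    constructor
    intro a b h
    exact ⟨h.1.symm, h.2.symm⟩
  loopless := by
    constructor
    intro a h
    exact h.1 rfl


/- ### Auxiliary lemmas -/

namespace CongestionAux

open SimpleGraph Finset Sum

variable {W : Type*}

lemma reach_inv {H : SimpleGraph W} (c : W → Prop)
    (hc : ∀ a b : W, H.Adj a b → (c a ↔ c b)) {a b : W} (h : H.Reachable a b) : c a ↔ c b := by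
  obtain ⟨w⟩ := h
  induction w with
  | nil => rfl
  | cons h q ih => exact (hc _ _ h).trans ih

lemma walk_parity {H : SimpleGraph W} (c : W → ZMod 2)
    (hc : ∀ a b : W, H.Adj a b → c b = c a + 1) {a b : W} (w : H.Walk a b) :
    c b = c a + w.length := by
  induction w with
  | nil => simp
  | cons h q ih =>
    rw [ih, hc _ _ h, Walk.length_cons]
    push_cast
    ring

lemma not_reachable_deleteEdges {T : SimpleGraph W} (hT : T.IsAcyclic) {a b : W}
    (p : T.Walk a b) (hp : p.IsPath) {e : Sym2 W} (he : e ∈ p.edges) :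
    ¬ (T.deleteEdges {e}).Reachable a b := by
  induction p with
  | nil => simp at he
  | @cons a c b h q ih =>
    rw [Walk.cons_isPath_iff] at hp
    rw [Walk.edges_cons, List.mem_cons] at he
    rcases he with rfl | he
    · intro hr
      have hq : ∀ f ∈ q.edges, f ∉ ({s(a, c)} : Set (Sym2 W)) := by
        intro f hf
        simp only [Set.mem_singleton_iff]
        rintro rfl
        exact hp.2 (q.fst_mem_support_of_mem_edges hf)
      have hrc : (T.deleteEdges {s(a, c)}).Reachable a c :=
        hr.trans (q.toDeleteEdges {s(a, c)} hq).reachable.symm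
      have hb := isAcyclic_iff_forall_adj_isBridge.mp hT h
      rw [isBridge_iff] at hb
      exact hb hrc
    · have hne : s(a, c) ≠ e := by
        rintro rfl
        exact hp.2 (q.fst_mem_support_of_mem_edges he)
      intro hr
      have hadj : (T.deleteEdges {e}).Adj a c := by
        rw [deleteEdges_adj]
        exact ⟨h, by simpa using hne⟩
      exact ih hp.1 he (hadj.symm.reachable.trans hr)

lemma sep_iff {R : SimpleGraph W} {a b : W} :
    (∃ c d : W, s(a, b) = s(c, d) ∧ ¬ R.Reachable c d) ↔ ¬ R.Reachable a b := by
  constructor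
  · rintro ⟨c, d, hcd, hr⟩
    rw [Sym2.eq_iff] at hcd
    rcases hcd with ⟨rfl, rfl⟩ | ⟨rfl, rfl⟩
    · exact hr
    · exact fun h => hr h.symm
  · exact fun h => ⟨a, b, rfl, h⟩

lemma N_eq [Fintype W] [DecidableEq W] {T : SimpleGraph W} (hT : T.IsTree)
    {a b : W} (p : T.Walk a b) (hp : p.IsPath) :
    (Finset.univ.filter fun e : Sym2 W =>
        e ∈ T.edgeSet ∧ ∃ c d : W, s(a, b) = s(c, d) ∧
          ¬ (T.deleteEdges {e}).Reachable c d).card = p.length := by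
  classical
  have h1 : (Finset.univ.filter fun e : Sym2 W =>
      e ∈ T.edgeSet ∧ ∃ c d : W, s(a, b) = s(c, d) ∧
        ¬ (T.deleteEdges {e}).Reachable c d) = p.edges.toFinset := by
    ext e
    simp only [mem_filter, mem_univ, true_and, List.mem_toFinset, sep_iff]
    constructor
    · rintro ⟨heT, hsep⟩
      by_contra hne
      exact hsep (p.toDeleteEdges {e} (fun f hf => by
        simp only [Set.mem_singleton_iff]; rintro rfl; exact hne hf)).reachable
    · intro he
      exact ⟨p.edges_subset_edgeSet he,
        not_reachable_deleteEdges hT.2 p hp he⟩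
  rw [h1, List.card_toFinset, hp.isTrail.edges_nodup.dedup, Walk.length_edges]

variable {V : Type*} [Fintype V] [DecidableEq V]

lemma treeCong_eq_sum (G T : SimpleGraph V) :
    treeCong G T (fun _ => (1 : ℝ)) 1 =
      ∑ f ∈ G.edgeFinset,
        ((Finset.univ.filter fun e : Sym2 V => e ∈ T.edgeSet ∧
            ∃ a b : V, f = s(a, b) ∧ ¬ (T.deleteEdges {e}).Reachable a b).card : ℝ) := by
  unfold treeCong edgeCongestion
  rw [Nat.cast_one, div_one, Real.rpow_one]
  simp only [pow_one]
  have step1 : ∀ e : Sym2 V,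
      (if e ∈ T.edgeSet then
          (∑ f : Sym2 V, if f ∈ G.edgeSet ∧ ∃ a b : V, f = s(a, b) ∧
              ¬ (T.deleteEdges {e}).Reachable a b then (1 : ℝ) else 0)
        else 0)
      = ∑ f : Sym2 V, if f ∈ G.edgeSet ∧ e ∈ T.edgeSet ∧ ∃ a b : V, f = s(a, b) ∧
          ¬ (T.deleteEdges {e}).Reachable a b then (1 : ℝ) else 0 := by
    intro e
    split_ifs with h
    · apply Finset.sum_congr rfl
      intro f _
      simp [h]
    · symm
      apply Finset.sum_eq_zero
      intro f _
      simp [h]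
  simp only [step1]
  rw [Finset.sum_comm]
  have step2 : ∀ f : Sym2 V,
      (∑ e : Sym2 V, if f ∈ G.edgeSet ∧ e ∈ T.edgeSet ∧ ∃ a b : V, f = s(a, b) ∧
          ¬ (T.deleteEdges {e}).Reachable a b then (1 : ℝ) else 0)
      = if f ∈ G.edgeFinset then
          ((Finset.univ.filter fun e : Sym2 V => e ∈ T.edgeSet ∧
              ∃ a b : V, f = s(a, b) ∧ ¬ (T.deleteEdges {e}).Reachable a b).card : ℝ)
        else 0 := by
    intro f
    by_cases h : f ∈ G.edgeSet
    · rw [if_pos (by simpa [mem_edgeFinset] using h)]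
      rw [Finset.card_filter]
      push_cast
      apply Finset.sum_congr rfl
      intro e _
      simp [h]
    · rw [if_neg (by simpa [mem_edgeFinset] using h)]
      apply Finset.sum_eq_zero
      intro e _
      simp [h]
  simp only [step2]
  rw [Finset.sum_ite_mem, Finset.univ_inter]

lemma sum_w {G T : SimpleGraph V} (hle : T ≤ G) :
    ∑ f ∈ G.edgeFinset, (if f ∈ T.edgeSet then (1 : ℝ) else 3)
      = 3 * G.edgeFinset.card - 2 * T.edgeFinset.card := by
  classical
  have h1 : ∀ f : Sym2 V, (if f ∈ T.edgeSet then (1 : ℝ) else 3)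
      = 3 - (if f ∈ T.edgeSet then 2 else 0) := by
    intro f; split_ifs <;> norm_num
  simp only [h1]
  rw [Finset.sum_sub_distrib, Finset.sum_const, ← Finset.sum_filter]
  have h2 : G.edgeFinset.filter (fun f => f ∈ T.edgeSet) = T.edgeFinset := by
    ext f
    simp only [mem_filter, mem_edgeFinset]
    exact ⟨fun h => h.2, fun h => ⟨edgeSet_mono hle h, h⟩⟩
  rw [h2, Finset.sum_const]
  push_cast
  ring

/- ### bipartite facts -/

variable {A B : Type*}

lemma edge_form {f : Sym2 (A ⊕ B)} (h : f ∈ (completeBipartiteGraph A B).edgeSet) :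
    ∃ (i : A) (j : B), f = s(Sum.inl i, Sum.inr j) := by
  induction f with
  | _ a b =>
    rw [mem_edgeSet] at h
    rcases h with ⟨ha, hb⟩ | ⟨ha, hb⟩
    · obtain ⟨i, rfl⟩ := isLeft_iff.mp ha
      obtain ⟨j, rfl⟩ := isRight_iff.mp hb
      exact ⟨i, j, rfl⟩
    · obtain ⟨j, rfl⟩ := isRight_iff.mp ha
      obtain ⟨i, rfl⟩ := isLeft_iff.mp hb
      exact ⟨i, j, Sym2.eq_swap⟩

lemma odd_length {T : SimpleGraph (A ⊕ B)} (hle : T ≤ completeBipartiteGraph A B)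
    {i : A} {j : B} (p : T.Walk (Sum.inl i) (Sum.inr j)) : Odd p.length := by
  have hpar := walk_parity (H := T) (Sum.elim (fun _ => (0 : ZMod 2)) fun _ => 1)
    (fun a b hab => by
      have := hle hab
      rcases this with ⟨ha, hb⟩ | ⟨ha, hb⟩
      · obtain ⟨x, rfl⟩ := isLeft_iff.mp ha
        obtain ⟨y, rfl⟩ := isRight_iff.mp hb
        show (1 : ZMod 2) = 0 + 1
        decide
      · obtain ⟨y, rfl⟩ := isRight_iff.mp ha
        obtain ⟨x, rfl⟩ := isLeft_iff.mp hb
        show (0 : ZMod 2) = 1 + 1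
        decide) p
  simp only [elim_inl, elim_inr, zero_add] at hpar
  rw [Nat.odd_iff]
  rcases Nat.even_or_odd p.length with he | ho
  · exfalso
    rw [Nat.even_iff] at he
    rw [← Nat.mod_add_div p.length 2, he] at hpar
    push_cast at hpar
    rw [zero_add, show ((2 : ZMod 2)) = 0 from rfl, zero_mul] at hpar
    exact one_ne_zero hpar
  · exact Nat.odd_iff.mp ho

/- ### the double star -/

def dstar (x0 : A) (y0 : B) : SimpleGraph (A ⊕ B) where
  Adj a b := (∃ i j, a = Sum.inl i ∧ b = Sum.inr j ∧ (i = x0 ∨ j = y0)) ∨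
    (∃ i j, a = Sum.inr j ∧ b = Sum.inl i ∧ (i = x0 ∨ j = y0))
  symm := by
    constructor
    rintro a b (⟨i, j, rfl, rfl, h⟩ | ⟨i, j, rfl, rfl, h⟩)
    · exact Or.inr ⟨i, j, rfl, rfl, h⟩
    · exact Or.inl ⟨i, j, rfl, rfl, h⟩
  loopless := by
    constructor
    rintro a (⟨i, j, rfl, h, -⟩ | ⟨i, j, rfl, h, -⟩) <;> simp at h

variable {x0 : A} {y0 : B}

@[simp] lemma dstar_adj_inl_inr {i : A} {j : B} :
    (dstar x0 y0).Adj (Sum.inl i) (Sum.inr j) ↔ i = x0 ∨ j = y0 := by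
  constructor
  · rintro (⟨i', j', hi, hj, h⟩ | ⟨i', j', hi, hj, h⟩)
    · rw [Sum.inl.injEq] at hi; rw [Sum.inr.injEq] at hj; subst hi; subst hj; exact h
    · simp at hi
  · intro h; exact Or.inl ⟨i, j, rfl, rfl, h⟩

@[simp] lemma dstar_adj_inr_inl {i : A} {j : B} :
    (dstar x0 y0).Adj (Sum.inr j) (Sum.inl i) ↔ i = x0 ∨ j = y0 := by
  rw [adj_comm]; exact dstar_adj_inl_inr

@[simp] lemma dstar_adj_inl_inl {i i' : A} : ¬ (dstar x0 y0).Adj (Sum.inl i) (Sum.inl i') := by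
  rintro (⟨a, b, -, h, -⟩ | ⟨a, b, h, -, -⟩) <;> simp at h

@[simp] lemma dstar_adj_inr_inr {j j' : B} : ¬ (dstar x0 y0).Adj (Sum.inr j) (Sum.inr j') := by
  rintro (⟨a, b, h, -, -⟩ | ⟨a, b, -, h, -⟩) <;> simp at h

lemma dstar_le : dstar x0 y0 ≤ completeBipartiteGraph A B := by
  rintro a b (⟨i, j, rfl, rfl, -⟩ | ⟨i, j, rfl, rfl, -⟩) <;> simp

lemma dstar_connected : (dstar x0 y0).Connected := by
  rw [connected_iff_exists_forall_reachable]
  refine ⟨Sum.inl x0, ?_⟩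
  intro v
  match v with
  | Sum.inl i =>
    exact (Walk.cons (by simp : (dstar x0 y0).Adj (Sum.inl x0) (Sum.inr y0))
      (Walk.cons (by simp : (dstar x0 y0).Adj (Sum.inr y0) (Sum.inl i)) Walk.nil)).reachable
  | Sum.inr j =>
    exact (Walk.cons (by simp : (dstar x0 y0).Adj (Sum.inl x0) (Sum.inr j)) Walk.nil).reachable

lemma dstar_not_reach {i : A} {j : B} (h : i = x0 ∨ j = y0) :
    ¬ ((dstar x0 y0).deleteEdges {s(Sum.inl i, Sum.inr j)}).Reachable (Sum.inl i) (Sum.inr j) := by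
  classical
  set e : Sym2 (A ⊕ B) := s(Sum.inl i, Sum.inr j) with he
  intro hr
  by_cases hj : j = y0
  · by_cases hi : i = x0
    · -- middle edge
      have key := reach_inv (H := (dstar x0 y0).deleteEdges {e})
        (Sum.elim (fun i' => i' = x0) (fun j' => ¬ j' = y0)) ?_ hr
      · simp only [Sum.elim_inl, Sum.elim_inr] at key
        exact (key.mp hi) hj
      · intro a b hab
        rw [deleteEdges_adj, Set.mem_singleton_iff] at hab
        obtain ⟨hadj, hne⟩ := hab
        match a, b with
        | Sum.inl a, Sum.inl b => exact absurd hadj dstar_adj_inl_inl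
        | Sum.inr a, Sum.inr b => exact absurd hadj dstar_adj_inr_inr
        | Sum.inl a, Sum.inr b =>
          rw [dstar_adj_inl_inr] at hadj
          simp only [Sum.elim_inl, Sum.elim_inr]
          rcases hadj with rfl | rfl
          · have hb : ¬ b = y0 := by
              rintro rfl
              exact hne (by rw [he, hi, hj])
            simp [hb]
          · have ha : ¬ a = x0 := by
              rintro rfl
              exact hne (by rw [he, hi, hj])
            simp [ha]
        | Sum.inr a, Sum.inl b =>
          rw [dstar_adj_inr_inl] at hadj
          simp only [Sum.elim_inl, Sum.elim_inr]
          rcases hadj with rfl | rfl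
          · have ha : ¬ a = y0 := by
              rintro rfl
              exact hne (by rw [he, hi, hj]; exact Sym2.eq_swap)
            simp [ha]
          · have hb : ¬ b = x0 := by
              rintro rfl
              exact hne (by rw [he, hi, hj]; exact Sym2.eq_swap)
            simp [hb]
    · -- i ≠ x0, j = y0 : leaf edge at inl i
      have key := reach_inv (H := (dstar x0 y0).deleteEdges {e})
        (fun v => v = Sum.inl i) ?_ hr
      · simp only at key
        simp at key
      · intro a b hab
        rw [deleteEdges_adj, Set.mem_singleton_iff] at hab
        obtain ⟨hadj, hne⟩ := hab
        match a, b with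
        | Sum.inl a, Sum.inl b => exact absurd hadj dstar_adj_inl_inl
        | Sum.inr a, Sum.inr b => exact absurd hadj dstar_adj_inr_inr
        | Sum.inl a, Sum.inr b =>
          rw [dstar_adj_inl_inr] at hadj
          constructor
          · intro ha
            obtain rfl : a = i := by simpa using ha
            rcases hadj with rfl | rfl
            · exact absurd rfl hi
            · exact absurd (by rw [he, hj] : s(Sum.inl a, Sum.inr b) = e) hne
          · intro hb
            exact absurd hb (by simp)
        | Sum.inr a, Sum.inl b =>
          rw [dstar_adj_inr_inl] at hadj
          constructor
          · intro ha
            exact absurd ha (by simp)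
          · intro hb
            obtain rfl : b = i := by simpa using hb
            rcases hadj with rfl | rfl
            · exact absurd rfl hi
            · exact absurd (by rw [he, hj]; exact Sym2.eq_swap : s(Sum.inr a, Sum.inl b) = e) hne
  · -- j ≠ y0, so i = x0 : leaf edge at inr j
    rcases h with h | h
    swap
    · exact absurd h hj
    have key := reach_inv (H := (dstar x0 y0).deleteEdges {e})
      (fun v => v = Sum.inr j) ?_ hr
    · simp at key
    · intro a b hab
      rw [deleteEdges_adj, Set.mem_singleton_iff] at hab
      obtain ⟨hadj, hne⟩ := hab
      match a, b with
      | Sum.inl a, Sum.inl b => exact absurd hadj dstar_adj_inl_inl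
      | Sum.inr a, Sum.inr b => exact absurd hadj dstar_adj_inr_inr
      | Sum.inl a, Sum.inr b =>
        rw [dstar_adj_inl_inr] at hadj
        constructor
        · intro ha
          exact absurd ha (by simp)
        · intro hb
          obtain rfl : b = j := by simpa using hb
          rcases hadj with rfl | rfl
          · exact absurd (by rw [he, h] : s(Sum.inl a, Sum.inr b) = e) hne
          · exact absurd rfl hj
      | Sum.inr a, Sum.inl b =>
        rw [dstar_adj_inr_inl] at hadj
        constructor
        · intro ha
          obtain rfl : a = j := by simpa using ha
          rcases hadj with rfl | rfl
          · exact absurd (by rw [he, h]; exact Sym2.eq_swap : s(Sum.inr a, Sum.inl b) = e) hne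
          · exact absurd rfl hj
        · intro hb
          exact absurd hb (by simp)

lemma dstar_isTree : (dstar x0 y0).IsTree := by
  constructor
  · exact dstar_connected
  · rw [isAcyclic_iff_forall_adj_isBridge]
    intro v w hadj
    match v, w with
    | Sum.inl a, Sum.inl b => simp at hadj
    | Sum.inr a, Sum.inr b => simp at hadj
    | Sum.inl a, Sum.inr b =>
      rw [isBridge_iff]
      exact dstar_not_reach (dstar_adj_inl_inr.mp hadj)
    | Sum.inr a, Sum.inl b =>
      rw [isBridge_iff]
      refine fun hr => dstar_not_reach (dstar_adj_inr_inl.mp hadj) ?_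
      rw [show s(Sum.inl b, Sum.inr a) = s(Sum.inr a, Sum.inl b) from Sym2.eq_swap]
      exact hr.symm

lemma dstar_path (i : A) (j : B) :
    ∃ p : (dstar x0 y0).Walk (Sum.inl i) (Sum.inr j), p.IsPath ∧
      p.length = if i = x0 ∨ j = y0 then 1 else 3 := by
  by_cases h : i = x0 ∨ j = y0
  · refine ⟨Walk.cons (dstar_adj_inl_inr.mpr h) Walk.nil, ?_, by simp [h]⟩
    simp [Walk.cons_isPath_iff]
  · push_neg at h
    refine ⟨Walk.cons (dstar_adj_inl_inr.mpr (Or.inr rfl))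
      (Walk.cons (dstar_adj_inr_inl.mpr (Or.inl rfl))
        (Walk.cons (dstar_adj_inl_inr.mpr (Or.inl rfl)) Walk.nil)), ?_, by simp [h]⟩
    simp only [Walk.cons_isPath_iff, Walk.isPath_iff_eq_nil, Walk.support_cons,
      Walk.support_nil, List.mem_cons, List.mem_singleton]
    push_neg
    refine ⟨⟨⟨trivial, ?_⟩, ?_⟩, ?_, ?_, ?_⟩ <;> simp [h.1, h.2, Ne.symm h.1, Ne.symm h.2]

lemma dstar_nbhd_inl {i : A} (hi : i ≠ x0) :
    (dstar x0 y0).neighborSet (Sum.inl i) = {Sum.inr y0} := by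
  ext v
  simp only [mem_neighborSet, Set.mem_singleton_iff]
  match v with
  | Sum.inl b => simp
  | Sum.inr b =>
    rw [dstar_adj_inl_inr]
    constructor
    · rintro (rfl | rfl)
      · exact absurd rfl hi
      · rfl
    · rintro h'
      obtain rfl : b = y0 := by simpa using h'
      exact Or.inr rfl

lemma dstar_nbhd_inr {j : B} (hj : j ≠ y0) :
    (dstar x0 y0).neighborSet (Sum.inr j) = {Sum.inl x0} := by
  ext v
  simp only [mem_neighborSet, Set.mem_singleton_iff]
  match v with
  | Sum.inr b => simp
  | Sum.inl b =>
    rw [dstar_adj_inr_inl]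
    constructor
    · rintro (rfl | rfl)
      · rfl
      · exact absurd rfl hj
    · rintro h'
      obtain rfl : b = x0 := by simpa using h'
      exact Or.inl rfl

lemma cbg_card (m n : ℕ) :
    (completeBipartiteGraph (Fin m) (Fin n)).edgeFinset.card = m * n := by
  classical
  rw [show m * n = (Finset.univ : Finset (Fin m × Fin n)).card by simp]
  symm
  apply Finset.card_bij (fun (x : Fin m × Fin n) _ => s(Sum.inl x.1, Sum.inr x.2))
  · intro x _
    rw [mem_edgeFinset, mem_edgeSet]
    simp
  · intro x _ y _ hxy
    rw [Sym2.eq_iff] at hxy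
    rcases hxy with ⟨h1, h2⟩ | ⟨h1, h2⟩ <;> simp_all [Prod.ext_iff]
  · intro e he
    rw [mem_edgeFinset] at he
    induction e with
    | _ a b =>
      rw [mem_edgeSet] at he
      rcases he with ⟨ha, hb⟩ | ⟨ha, hb⟩
      · obtain ⟨i, rfl⟩ := isLeft_iff.mp ha
        obtain ⟨j, rfl⟩ := isRight_iff.mp hb
        exact ⟨(i, j), Finset.mem_univ _, rfl⟩
      · obtain ⟨j, rfl⟩ := isRight_iff.mp ha
        obtain ⟨i, rfl⟩ := isLeft_iff.mp hb
        exact ⟨(i, j), Finset.mem_univ _, Sym2.eq_swap⟩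

end CongestionAux

open CongestionAux SimpleGraph Finset in
set_option maxHeartbeats 2000000 in

/-- For the complete bipartite graph `K_{m,n}`, `C_1(K_{m,n}) = 3mn − 2(m+n−1)`, attained by
the double-star spanning tree in which only two vertices have degree `> 1`. -/
theorem completeBipartite_cong_one (m n : ℕ) (hm : 1 ≤ m) (hn : 1 ≤ n) :
    graphCong (completeBipartiteGraph (Fin m) (Fin n)) (fun _ => (1 : ℝ)) 1
        = 3 * (m : ℝ) * n - 2 * ((m : ℝ) + n - 1) ∧
      ∃ T : SimpleGraph (Fin m ⊕ Fin n),
        IsSpanningTree (completeBipartiteGraph (Fin m) (Fin n)) T ∧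
        treeCong (completeBipartiteGraph (Fin m) (Fin n)) T (fun _ => (1 : ℝ)) 1
          = 3 * (m : ℝ) * n - 2 * ((m : ℝ) + n - 1) ∧
        ∃ x y : Fin m ⊕ Fin n, x ≠ y ∧
          ∀ z : Fin m ⊕ Fin n, 1 < (T.neighborSet z).ncard → z = x ∨ z = y := by
  classical
  set G := completeBipartiteGraph (Fin m) (Fin n) with hGdef
  set x0 : Fin m := ⟨0, hm⟩ with hx0
  set y0 : Fin n := ⟨0, hn⟩ with hy0
  set Tstar := dstar x0 y0 with hTstar
  have hstar_tree : Tstar.IsTree := dstar_isTree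
  have hstar_sp : IsSpanningTree G Tstar := ⟨dstar_le, hstar_tree⟩
  -- edge counts
  have hEG : ((G.edgeFinset.card : ℕ) : ℝ) = (m : ℝ) * n := by
    rw [cbg_card m n]; push_cast; ring
  have hET : ∀ T : SimpleGraph (Fin m ⊕ Fin n), T.IsTree →
      ((T.edgeFinset.card : ℕ) : ℝ) = (m : ℝ) + n - 1 := by
    intro T hT
    have hc := hT.card_edgeFinset
    rw [show Fintype.card (Fin m ⊕ Fin n) = m + n by simp] at hc
    have := congrArg (Nat.cast : ℕ → ℝ) hc
    push_cast at this
    linarith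
  -- the common reference value
  have hval : ∀ T : SimpleGraph (Fin m ⊕ Fin n), IsSpanningTree G T →
      ∑ f ∈ G.edgeFinset, (if f ∈ T.edgeSet then (1 : ℝ) else 3)
        = 3 * (m : ℝ) * n - 2 * ((m : ℝ) + n - 1) := by
    intro T hT
    rw [sum_w hT.1, hEG, hET T hT.2]
    ring
  -- lower bound for any spanning tree
  have hlow : ∀ T : SimpleGraph (Fin m ⊕ Fin n), IsSpanningTree G T →
      3 * (m : ℝ) * n - 2 * ((m : ℝ) + n - 1) ≤ treeCong G T (fun _ => (1 : ℝ)) 1 := by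
    intro T hT
    rw [treeCong_eq_sum G T, ← hval T hT]
    apply Finset.sum_le_sum
    intro f hf
    rw [mem_edgeFinset] at hf
    obtain ⟨i, j, rfl⟩ := edge_form hf
    obtain ⟨p0⟩ := hT.2.1.preconnected (Sum.inl i) (Sum.inr j)
    have hN := N_eq hT.2 p0.toPath.1 p0.toPath.2
    rw [hN]
    have hodd : Odd p0.toPath.1.length := odd_length hT.1 p0.toPath.1
    rcases Classical.em (s(Sum.inl i, Sum.inr j) ∈ T.edgeSet) with hmem | hmem
    · rw [if_pos hmem]
      have : p0.toPath.1.length ≠ 0 := by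
        intro h0
        exact (by simp : (Sum.inl i : Fin m ⊕ Fin n) ≠ Sum.inr j)
          (Walk.eq_of_length_eq_zero h0)
      have : 1 ≤ p0.toPath.1.length := Nat.one_le_iff_ne_zero.mpr this
      exact_mod_cast this
    · rw [if_neg hmem]
      have h1 : p0.toPath.1.length ≠ 1 := by
        intro h1
        exact hmem (Walk.adj_of_length_eq_one h1)
      have h3 : 3 ≤ p0.toPath.1.length := by
        obtain ⟨k, hk⟩ := hodd
        omega
      exact_mod_cast h3
  -- exact value for the double star
  have hstar_val : treeCong G Tstar (fun _ => (1 : ℝ)) 1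
      = 3 * (m : ℝ) * n - 2 * ((m : ℝ) + n - 1) := by
    rw [treeCong_eq_sum G Tstar, ← hval Tstar hstar_sp]
    apply Finset.sum_congr rfl
    intro f hf
    rw [mem_edgeFinset] at hf
    obtain ⟨i, j, rfl⟩ := edge_form hf
    obtain ⟨p, hp, hlen⟩ := dstar_path (x0 := x0) (y0 := y0) i j
    rw [N_eq hstar_tree p hp, hlen]
    have hcond : s(Sum.inl i, Sum.inr j) ∈ Tstar.edgeSet ↔ (i = x0 ∨ j = y0) := by
      rw [mem_edgeSet, hTstar, dstar_adj_inl_inr]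
    rcases Classical.em (i = x0 ∨ j = y0) with hc | hc
    · rw [if_pos hc, if_pos (hcond.mpr hc)]
      norm_num
    · rw [if_neg hc, if_neg (fun h => hc (hcond.mp h))]
      norm_num
  constructor
  · -- the infimum
    apply IsLeast.csInf_eq
    constructor
    · exact ⟨Tstar, hstar_sp, hstar_val⟩
    · rintro x ⟨T, hT, rfl⟩
      exact hlow T hT
  · refine ⟨Tstar, hstar_sp, hstar_val, Sum.inl x0, Sum.inr y0, by simp, ?_⟩
    intro z hz
    match z with
    | Sum.inl i =>
      by_cases hi : i = x0
      · exact Or.inl (by rw [hi])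
      · exfalso
        rw [hTstar, dstar_nbhd_inl hi, Set.ncard_singleton] at hz
        exact lt_irrefl 1 hz
    | Sum.inr j =>
      by_cases hj : j = y0
      · exact Or.inr (by rw [hj])
      · exfalso
        rw [hTstar, dstar_nbhd_inr hj, Set.ncard_singleton] at hz
        exact lt_irrefl 1 hz
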